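/- Let H be a self-similar subgroup of Ω and let N be a normal subgroup of H contained in the stabilizer of the first level of the tree. If H/N is torsion-free, then H is torsion-free. -/

import Mathlib

namespace BinTree

/-- Vertices of the infinite rooted binary tree: finite words over `{0,1}`. -/
abbrev Vertex : Type := List Bool

/-- A function on vertices is a tree automorphism function if it preserves lengths
(levels) and prefixes. -/
def IsTreeAutFun (f : Vertex → Vertex) : Prop :=
  (∀ v, (f v).length = v.length) ∧ ∀ v w : Vertex, (f (v ++ w)).take v.length = f v

/-- `Ω`: the automorphism group of the infinite rooted binary tree, realized as the
subgroup of permutations of the set of vertices preserving the tree structure. -/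
def TreeAut : Subgroup (Equiv.Perm Vertex) where
  carrier := {e | IsTreeAutFun ⇑e}
  one_mem' := ⟨fun _ => rfl, fun v w => by
    simpa using List.take_left (l₁ := v) (l₂ := w)⟩
  mul_mem' := by
    rintro a b ha hb
    obtain ⟨ha1, ha2⟩ := ha
    obtain ⟨hb1, hb2⟩ := hb
    refine ⟨fun v => ?_, fun v w => ?_⟩
    · simp [Equiv.Perm.mul_apply, ha1, hb1]
    · have hb' : b (v ++ w) = b v ++ (b (v ++ w)).drop v.length := by
        conv_lhs => rw [← List.take_append_drop v.length (b (v ++ w)), hb2]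
      have hlen : (b v).length = v.length := hb1 v
      calc ((a * b) (v ++ w)).take v.length
          = (a (b v ++ (b (v ++ w)).drop v.length)).take v.length := by
            rw [Equiv.Perm.mul_apply, ← hb']
        _ = a (b v) := by rw [← hlen]; exact ha2 _ _
        _ = (a * b) v := rfl
  inv_mem' := by
    intro a ha
    obtain ⟨ha1, ha2⟩ := ha
    show IsTreeAutFun ⇑a⁻¹
    have hlen : ∀ v : Vertex, (a⁻¹ v).length = v.length := by
      intro v
      have h := ha1 (a⁻¹ v)
      rw [← Equiv.Perm.mul_apply, mul_inv_cancel, Equiv.Perm.one_apply] at h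
      exact h.symm ▸ rfl
    refine ⟨hlen, fun v w => ?_⟩
    have htl : ((a⁻¹ (v ++ w)).take v.length).length = v.length := by
      rw [List.length_take, hlen, List.length_append]
      omega
    have key : a ((a⁻¹ (v ++ w)).take v.length) = v := by
      have h2 := ha2 ((a⁻¹ (v ++ w)).take v.length) ((a⁻¹ (v ++ w)).drop v.length)
      rw [List.take_append_drop, htl, ← Equiv.Perm.mul_apply, mul_inv_cancel, Equiv.Perm.one_apply] at h2
      rw [← h2]
      simpa using List.take_left (l₁ := v) (l₂ := w)
    have h3 := congrArg (⇑a⁻¹) key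
    rwa [← Equiv.Perm.mul_apply, inv_mul_cancel, Equiv.Perm.one_apply] at h3

/-- wreath recursion, forward map: `(g,h)σᵗ` -/
def wrFun (g h : Vertex → Vertex) (t : Bool) : Vertex → Vertex
  | [] => []
  | x :: v => (xor x t) :: (cond x (h v) (g v))

/-- wreath recursion, inverse map -/
def wrFunInv (g h : Vertex → Vertex) (t : Bool) : Vertex → Vertex
  | [] => []
  | y :: w => (xor y t) :: (cond (xor y t) (h w) (g w))

/-- `(g,h)σᵗ` as a permutation of the vertices. -/
def wrPerm (g h : Equiv.Perm Vertex) (t : Bool) : Equiv.Perm Vertex where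
  toFun := wrFun ⇑g ⇑h t
  invFun := wrFunInv ⇑g.symm ⇑h.symm t
  left_inv := by
    intro v
    cases v with
    | nil => rfl
    | cons x v => cases x <;> cases t <;> simp [wrFun, wrFunInv]
  right_inv := by
    intro v
    cases v with
    | nil => rfl
    | cons x v => cases x <;> cases t <;> simp [wrFun, wrFunInv]

/-- The element `(g,h)σᵗ` of `Ω`: acts on the first level by `σᵗ` (where `σ` is the
swap of the two level-one subtrees), with section `g` at the vertex `0` and section
`h` at the vertex `1`.  Thus `(γ₀,γ₁)τ` of the wreath recursion
`Ω ≃ (Ω × Ω) ⋊ S₂` is `wr γ₀ γ₁ t` (`t = true` iff `τ = σ`). -/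
def wr (g h : TreeAut) (t : Bool) : TreeAut :=
  ⟨wrPerm g.1 h.1 t, by
    have hg : IsTreeAutFun ⇑g.1 := g.2
    have hh : IsTreeAutFun ⇑h.1 := h.2
    constructor
    · intro v
      cases v with
      | nil => rfl
      | cons x v =>
        cases x <;> simp [wrPerm, wrFun, hg.1, hh.1]
    · intro v w
      cases v with
      | nil => simp [wrPerm, wrFun]
      | cons x v =>
        cases x <;> simp [wrPerm, wrFun, hg.2, hh.2]⟩

/-- Application of a tree automorphism to a vertex. -/
def ap (γ : TreeAut) (v : Vertex) : Vertex := γ.1 v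

/-- The permutation induced by `γ ∈ Ω` on level `n` of the tree. -/
def levelPerm (n : ℕ) (γ : TreeAut) : Equiv.Perm (List.Vector Bool n) where
  toFun v := ⟨γ.1 v.1, by
    have h : IsTreeAutFun ⇑γ.1 := γ.2
    rw [h.1 v.1]; exact v.2⟩
  invFun v := ⟨γ.1.symm v.1, by
    have h : IsTreeAutFun ⇑γ.1 := γ.2
    have h2 := h.1 (γ.1.symm v.1)
    rw [Equiv.apply_symm_apply] at h2
    exact h2.symm.trans v.2⟩
  left_inv v := Subtype.ext (Equiv.symm_apply_apply _ _)
  right_inv v := Subtype.ext (Equiv.apply_symm_apply _ _)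

/-- Restriction to level `n` as a group homomorphism. -/
def levelHom (n : ℕ) : TreeAut →* Equiv.Perm (List.Vector Bool n) where
  toFun := levelPerm n
  map_one' := Equiv.ext fun v => Subtype.ext rfl
  map_mul' := fun g h => Equiv.ext fun v => Subtype.ext rfl

/-- `sgn_n`: the sign of the permutation induced on level `n`. -/
def sgn (n : ℕ) (γ : TreeAut) : ℤˣ := Equiv.Perm.sign (levelPerm n γ)

/-- An odometer: acts as a single `2^n`-cycle on each level `n ≥ 1`. -/
def IsOdometer (γ : TreeAut) : Prop :=
  ∀ n : ℕ, 1 ≤ n → (levelPerm n γ).IsCycle ∧ (levelPerm n γ).support = Finset.univ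

/-- The profinite topology on `Ω`: the coarsest topology making all level
restrictions (to the discrete finite groups) continuous. -/
instance : TopologicalSpace TreeAut :=
  ⨅ n : ℕ, TopologicalSpace.induced (levelPerm n) ⊥

/-- A vertex `w` is in a stable cycle of `γ` of length `k`: its `γ`-orbit has exactly
`k` elements, and for every level `m` above the level of `w`, all level-`m` vertices
lying above this orbit are in one single `γ`-cycle (necessarily of length
`2^(m - n) * k`, which we record via the periodicity condition). -/
def InStableCycle (γ : TreeAut) (w : Vertex) (k : ℕ) : Prop :=
  0 < k ∧ ap (γ ^ k) w = w ∧ (∀ j : ℕ, 0 < j → j < k → ap (γ ^ j) w ≠ w) ∧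
  (∀ u : Vertex, w.length < u.length → (∃ i : ℕ, u.take w.length = ap (γ ^ i) w) →
    (ap (γ ^ (2 ^ (u.length - w.length) * k)) u = u ∧
      ∀ u' : Vertex, u'.length = u.length →
        (∃ i : ℕ, u'.take w.length = ap (γ ^ i) w) → ∃ j : ℕ, ap (γ ^ j) u = u'))

/-- Self-similar subgroup: closed under taking sections (here the section of `γ` at
the first-level vertex `x` is characterized by `(xv)γ = (x)γ ⬝ (v)γₓ`). -/
def SelfSimilar (H : Subgroup TreeAut) : Prop :=
  ∀ γ ∈ H, ∀ x : Bool, ∀ δ : TreeAut,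
    (∀ v : Vertex, ap γ (x :: v) = ap γ [x] ++ ap δ v) → δ ∈ H


theorem ap_mul' (g h : TreeAut) (v : Vertex) : ap (g * h) v = ap g (ap h v) := rfl

theorem ap_len (g : TreeAut) (v : Vertex) : (ap g v).length = v.length := g.2.1 v

/-- If `g` fixes `[x]`, then `g (x :: v) = x :: (g (x::v)).drop 1`. -/
theorem cons_section (g : TreeAut) (x : Bool) (hx : ap g [x] = [x]) (v : Vertex) :
    ap g (x :: v) = x :: (ap g (x :: v)).drop 1 := by
  have h2 := g.2.2 [x] v
  simp only [List.length_singleton, List.singleton_append] at h2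
  have h2' : (ap g (x :: v)).take 1 = [x] := by rw [show List.take 1 (ap g (x :: v)) = List.take 1 (g.1 (x :: v)) from rfl, h2]; exact hx
  conv_lhs => rw [← List.take_append_drop 1 (ap g (x :: v))]
  rw [h2']
  rfl

theorem inv_fix (g : TreeAut) (x : Bool) (hx : ap g [x] = [x]) : ap g⁻¹ [x] = [x] := by
  have : ap g⁻¹ (ap g [x]) = [x] := by
    show g.1.symm (g.1 [x]) = [x]
    simp
  rwa [hx] at this

theorem exists_section (g : TreeAut) (x : Bool) (hx : ap g [x] = [x]) :
    ∃ δ : TreeAut, ∀ v : Vertex, ap g (x :: v) = x :: ap δ v := by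
  have hx' : ap g⁻¹ [x] = [x] := inv_fix g x hx
  have hgi : ∀ v : Vertex, ap g⁻¹ (ap g v) = v := fun v => g.1.symm_apply_apply v
  have hig : ∀ v : Vertex, ap g (ap g⁻¹ v) = v := fun v => g.1.apply_symm_apply v
  refine ⟨⟨{ toFun := fun v => (ap g (x :: v)).drop 1,
             invFun := fun v => (ap g⁻¹ (x :: v)).drop 1,
             left_inv := ?_, right_inv := ?_ }, ?_, ?_⟩, ?_⟩
  · intro v
    simp only
    rw [← cons_section g x hx v, hgi]
    rfl
  · intro v
    simp only
    rw [← cons_section g⁻¹ x hx' v, hig]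
    rfl
  · intro v
    show ((ap g (x :: v)).drop 1).length = v.length
    rw [List.length_drop, ap_len]
    rfl
  · intro v w
    show (((ap g (x :: (v ++ w))).drop 1).take v.length) = (ap g (x :: v)).drop 1
    have h2 : (ap g ((x :: v) ++ w)).take (x :: v).length = ap g (x :: v) := g.2.2 (x :: v) w
    rw [show (x :: (v ++ w) : Vertex) = (x :: v) ++ w from rfl, List.take_drop, Nat.add_comm,
      show v.length + 1 = (x :: v).length from rfl, h2]
  · intro v
    exact cons_section g x hx v

theorem section_pow (g δ : TreeAut) (x : Bool) (hx : ap g [x] = [x])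
    (hδ : ∀ v : Vertex, ap g (x :: v) = x :: ap δ v) (k : ℕ) :
    ap (g ^ k) [x] = [x] ∧ ∀ v : Vertex, ap (g ^ k) (x :: v) = x :: ap (δ ^ k) v := by
  induction k with
  | zero => exact ⟨rfl, fun v => rfl⟩
  | succ n ih =>
    obtain ⟨ih1, ih2⟩ := ih
    constructor
    · rw [pow_succ, ap_mul', hx, ih1]
    · intro v
      rw [pow_succ, pow_succ, ap_mul', hδ, ih2, ap_mul']

/-- if `H ≤ Ω` is self-similar and `N ⊴ H` is contained in the
stabilizer of the first level, and `H/N` is torsion-free (no nontrivial coset has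
finite order), then `H` is torsion-free. -/
theorem torsion_free_of_quotient (H : Subgroup TreeAut) (hss : SelfSimilar H)
    (N : Subgroup TreeAut) (hNH : N ≤ H)
    (hnorm : ∀ h ∈ H, ∀ x ∈ N, h * x * h⁻¹ ∈ N)
    (hstab : ∀ x ∈ N, ∀ b : Bool, ap x [b] = [b])
    (htf : ∀ h ∈ H, (∃ m : ℕ, 0 < m ∧ h ^ m ∈ N) → h ∈ N) :
    ∀ h ∈ H, ∀ m : ℕ, 0 < m → h ^ m = 1 → h = 1 := by
  intro h hH m hm hpow
  have key : ∀ v : Vertex, ∀ g : TreeAut, g ∈ H → g ^ m = 1 → ap g v = v := by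
    intro v
    induction v with
    | nil =>
      intro g _ _
      have := ap_len g []
      exact List.eq_nil_of_length_eq_zero this
    | cons x w ih =>
      intro g hg hgm
      have hgN : g ∈ N := htf g hg ⟨m, hm, hgm ▸ N.one_mem⟩
      have hx : ap g [x] = [x] := hstab g hgN x
      obtain ⟨δ, hδ⟩ := exists_section g x hx
      have hδH : δ ∈ H := hss g hg x δ (fun v => by rw [hδ, hx]; rfl)
      have hδm : δ ^ m = 1 := by
        have := (section_pow g δ x hx hδ m).2
        rw [hgm] at this
        apply Subtype.ext
        apply Equiv.ext
        intro v
        have h1 := this v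
        have : (x :: v : Vertex) = x :: ap (δ ^ m) v := h1
        simpa using (List.cons.injEq x v x (ap (δ ^ m) v) ▸ this).2.symm
      rw [hδ, ih δ hδH hδm]
  apply Subtype.ext
  apply Equiv.ext
  intro v
  exact key v h hH hpow

end BinTree
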